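/- Let f : ℝ → ℝ be a concave function such that f(0) = 0, f is differentiable at 0 with f'(0) ≠ 0, f is bounded above with sup f > 0, and there exists x* > 0 with f(x*) > 0. Let P and Q be probability measures on a measurable space X and let M = (1/2)·P + (1/2)·Q. Define D^Rc(P, Q) = ⨆_C [ ∫ f(C(x) − ∫ C(m) dM(m)) dP(x) + ∫ f(∫ C(m) dM(m) − C(y)) dQ(y) ], where the supremum is taken over all bounded measurable functions C : X → ℝ. Then D^Rc(P, Q) ≥ 0, and D^Rc(P, Q) = 0 if and only if P = Q. -/

import Mathlib

open MeasureTheory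
open scoped ENNReal

/-- The relativistic centered objective `D^Rc` (supremum over bounded measurable critics,
centering by the mixture `M = ½P + ½Q`) is nonnegative, and vanishes iff `P = Q`. -/
theorem DRc_is_divergence
    {X : Type*} [MeasurableSpace X]
    (f : ℝ → ℝ)
    (hf : ∀ x y α : ℝ, 0 ≤ α → α ≤ 1 →
      α * f x + (1 - α) * f y ≤ f (α * x + (1 - α) * y))
    (hf0 : f 0 = 0)
    (hdiff : DifferentiableAt ℝ f 0)
    (hderiv : deriv f 0 ≠ 0)
    (hbdd : BddAbove (Set.range f))
    (hsup : 0 < ⨆ x, f x)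
    (hpos : ∃ xs : ℝ, 0 < xs ∧ 0 < f xs)
    (P Q : Measure X) [IsProbabilityMeasure P] [IsProbabilityMeasure Q]
    (M : Measure X) (hM : M = (1/2 : ℝ≥0∞) • P + (1/2 : ℝ≥0∞) • Q)
    (DRc : ℝ)
    (hDRc : DRc = ⨆ C : {C : X → ℝ // Measurable C ∧ ∃ B : ℝ, ∀ x, |C x| ≤ B},
      (∫ x, f (C.1 x - ∫ m, C.1 m ∂M) ∂P) + (∫ y, f ((∫ m, C.1 m ∂M) - C.1 y) ∂Q)) :
    0 ≤ DRc ∧ (DRc = 0 ↔ P = Q) := by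
  classical
  -- basic facts about f
  have hconc : ConcaveOn ℝ Set.univ f := by
    refine ⟨convex_univ, ?_⟩
    intro x _ y _ a b ha hb hab
    have h := hf x y a ha (by linarith)
    have hb' : (1 : ℝ) - a = b := by linarith
    simpa [smul_eq_mul, hb'] using h
  have hcont : Continuous f := by
    exact continuousOn_univ.1 (hconc.continuousOn isOpen_univ)
  set S := ⨆ x, f x with hSdef
  have hS0 : (0 : ℝ) ≤ S := hsup.le
  have hfS : ∀ u, f u ≤ S := fun u => le_ciSup hbdd u
  -- lower bound on intervals
  have hlow : ∀ R u : ℝ, |u| ≤ R → min (f (-R)) (f R) ≤ f u := by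
    intro R u hu
    have hR0 : 0 ≤ R := le_trans (abs_nonneg u) hu
    rcases eq_or_lt_of_le hR0 with h0 | hRpos
    · rw [← h0] at hu ⊢
      have hu0 : u = 0 := abs_eq_zero.1 (le_antisymm hu (abs_nonneg u))
      rw [hu0]
      simp
    · set α := (R - u) / (2 * R) with hα
      have hu' := abs_le.1 hu
      have hα0 : 0 ≤ α := by
        apply div_nonneg
        · linarith [hu'.2]
        · linarith
      have hα1 : α ≤ 1 := by
        rw [div_le_one (by linarith)]
        linarith [hu'.1]
      have key := hf (-R) R α hα0 hα1
      have harg : α * (-R) + (1 - α) * R = u := by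
        field_simp [hα]
        rw [hα]
        field_simp [hRpos.ne']
        ring
      rw [harg] at key
      nlinarith [min_le_left (f (-R)) (f R), min_le_right (f (-R)) (f R)]
  -- by concavity, f a + f (-a) ≤ 0
  have hsymm : ∀ a : ℝ, f a + f (-a) ≤ 0 := by
    intro a
    have h := hf a (-a) (1/2) (by norm_num) (by norm_num)
    have harg : (1/2 : ℝ) * a + (1 - 1/2) * (-a) = 0 := by ring
    rw [harg, hf0] at h
    linarith
  -- integrability of f composed with a bounded measurable function
  have hint : ∀ (μ : Measure X), IsFiniteMeasure μ → ∀ (g : X → ℝ),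
      Measurable g → (∃ B, ∀ x, |g x| ≤ B) → Integrable (fun x => f (g x)) μ := by
    intro μ hμ g hg hBex
    haveI := hμ
    obtain ⟨B, hB⟩ := hBex
    set R := |B| with hR
    have hgR : ∀ x, |g x| ≤ R := fun x => (hB x).trans (le_abs_self B)
    set L := min (f (-R)) (f R) with hL
    set K := max S (-L) with hK
    have hbound : ∀ x, ‖f (g x)‖ ≤ K := by
      intro x
      rw [Real.norm_eq_abs, abs_le]
      constructor
      · have h1 := hlow R (g x) (hgR x)
        have h2 := le_max_right S (-L)
        linarith
      · exact (hfS _).trans (le_max_left _ _)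
    exact Integrable.mono' (integrable_const K)
      ((hcont.measurable.comp hg).aestronglyMeasurable)
      (Filter.Eventually.of_forall hbound)
  -- each integral is bounded above by S
  have hintle : ∀ (μ : Measure X), IsProbabilityMeasure μ → ∀ (g : X → ℝ),
      (∫ x, f (g x) ∂μ) ≤ S := by
    intro μ hμ g
    haveI := hμ
    by_cases hg : Integrable (fun x => f (g x)) μ
    · calc ∫ x, f (g x) ∂μ ≤ ∫ _, S ∂μ :=
            integral_mono hg (integrable_const S) fun x => hfS _
        _ = S := by simp
    · rw [integral_undef hg]; exact hS0
  have hFbdd : BddAbove (Set.range (fun C : {C : X → ℝ // Measurable C ∧ ∃ B : ℝ, ∀ x, |C x| ≤ B} =>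
      (∫ x, f (C.1 x - ∫ m, C.1 m ∂M) ∂P) + (∫ y, f ((∫ m, C.1 m ∂M) - C.1 y) ∂Q))) := by
    refine ⟨S + S, ?_⟩
    rintro _ ⟨C, rfl⟩
    exact add_le_add (hintle P inferInstance _) (hintle Q inferInstance _)
  haveI hne' : Nonempty {C : X → ℝ // Measurable C ∧ ∃ B : ℝ, ∀ x, |C x| ≤ B} :=
    ⟨⟨fun _ => 0, measurable_const, 0, fun x => by simp⟩⟩
  -- nonnegativity: use the zero critic
  have hDRc0 : 0 ≤ DRc := by
    rw [hDRc]
    refine le_trans ?_ (le_ciSup hFbdd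
      ⟨fun _ => 0, measurable_const, 0, fun x => by simp⟩)
    simp [hf0]
  -- M is a probability measure
  have hMuniv : M Set.univ = 1 := by
    rw [hM]
    rw [Measure.add_apply, Measure.smul_apply, Measure.smul_apply, smul_eq_mul, smul_eq_mul,
      measure_univ, measure_univ, mul_one, one_div, ENNReal.inv_two_add_inv_two]
  haveI hMprob : IsProbabilityMeasure M := ⟨hMuniv⟩
  -- if P = Q then every critic value is ≤ 0
  have hle0 : P = Q → DRc ≤ 0 := by
    intro hPQ
    subst hPQ
    rw [hDRc]
    refine ciSup_le fun C => ?_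
    obtain ⟨hCm, B, hB⟩ := C.2
    set c := ∫ m, C.1 m ∂M with hc
    have h1 : Integrable (fun x => f (C.1 x - c)) P := by
      refine hint P inferInstance _ (hCm.sub measurable_const) ⟨B + |c|, fun x => ?_⟩
      calc |C.1 x - c| ≤ |C.1 x| + |c| := abs_sub _ _
        _ ≤ B + |c| := by linarith [hB x]
    have h2 : Integrable (fun x => f (c - C.1 x)) P := by
      refine hint P inferInstance _ (measurable_const.sub hCm) ⟨|c| + B, fun x => ?_⟩
      calc |c - C.1 x| ≤ |c| + |C.1 x| := abs_sub _ _
        _ ≤ |c| + B := by linarith [hB x]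
    rw [← integral_add h1 h2]
    refine integral_nonpos fun x => ?_
    have h := hsymm (C.1 x - c)
    simpa [neg_sub] using h
  -- hard direction: DRc = 0 → P = Q
  have hhard : DRc = 0 → P = Q := by
    intro hD0
    by_contra hPQ
    obtain ⟨s, hs, hne⟩ : ∃ s, MeasurableSet s ∧ P s ≠ Q s := by
      by_contra h
      push_neg at h
      exact hPQ (Measure.ext fun s hs => h s hs)
    set p := (P s).toReal with hp
    set q := (Q s).toReal with hq
    have hPfin : P s ≠ ⊤ := measure_ne_top _ _
    have hQfin : Q s ≠ ⊤ := measure_ne_top _ _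
    have hpq : p ≠ q := fun h => hne ((ENNReal.toReal_eq_toReal_iff' hPfin hQfin).1 h)
    set m := (p + q) / 2 with hm
    have hMs : (M s).toReal = m := by
      rw [hM]
      have h2 : ((1 : ℝ≥0∞)/2) ≠ ⊤ := by norm_num
      rw [Measure.add_apply, Measure.smul_apply, Measure.smul_apply, smul_eq_mul, smul_eq_mul,
        ENNReal.toReal_add (ENNReal.mul_ne_top h2 hPfin) (ENNReal.mul_ne_top h2 hQfin),
        ENNReal.toReal_mul, ENNReal.toReal_mul, ← hp, ← hq, hm, ENNReal.toReal_div]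
      norm_num
      ring
    -- critic: indicator of s scaled by t
    have hcritm : ∀ t : ℝ, Measurable (s.indicator fun _ => t) :=
      fun t => measurable_const.indicator hs
    have hcritb : ∀ t : ℝ, ∀ x, |s.indicator (fun _ => t) x| ≤ |t| := by
      intro t x
      by_cases hx : x ∈ s
      · rw [Set.indicator_of_mem hx]
      · rw [Set.indicator_of_notMem hx]; simp
    have hcint : ∀ t : ℝ, (∫ x, s.indicator (fun _ => t) x ∂M) = t * m := by
      intro t
      rw [integral_indicator_const t hs, smul_eq_mul, measureReal_def, hMs, mul_comm]
    -- the objective value of the scaled indicator critic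
    set g : ℝ → ℝ := fun t =>
      (p * f (t * (1 - m)) + (1 - p) * f (t * (-m)))
        + (q * f (t * (m - 1)) + (1 - q) * f (t * m)) with hg
    have hFg : ∀ t : ℝ,
        (∫ x, f (s.indicator (fun _ => t) x - ∫ m', s.indicator (fun _ => t) m' ∂M) ∂P)
          + (∫ y, f ((∫ m', s.indicator (fun _ => t) m' ∂M) - s.indicator (fun _ => t) y) ∂Q)
          = g t := by
      intro t
      rw [hcint t]
      have e1 : ∀ x, f (s.indicator (fun _ => t) x - t * m)
          = s.indicator (fun _ => f (t * (1 - m)) - f (t * (-m))) x + f (t * (-m)) := by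
        intro x
        by_cases hx : x ∈ s
        · rw [Set.indicator_of_mem hx, Set.indicator_of_mem hx,
            show t - t * m = t * (1 - m) by ring]
          ring
        · rw [Set.indicator_of_notMem hx, Set.indicator_of_notMem hx,
            show (0 : ℝ) - t * m = t * (-m) by ring]
          ring
      have e2 : ∀ y, f (t * m - s.indicator (fun _ => t) y)
          = s.indicator (fun _ => f (t * (m - 1)) - f (t * m)) y + f (t * m) := by
        intro y
        by_cases hy : y ∈ s
        · rw [Set.indicator_of_mem hy, Set.indicator_of_mem hy,
            show t * m - t = t * (m - 1) by ring]
          ring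
        · rw [Set.indicator_of_notMem hy, Set.indicator_of_notMem hy, sub_zero]
          ring
      simp_rw [e1, e2]
      rw [integral_add ((integrable_const _).indicator hs) (integrable_const _),
        integral_add ((integrable_const _).indicator hs) (integrable_const _),
        integral_indicator_const _ hs, integral_indicator_const _ hs,
        integral_const, integral_const]
      simp only [measureReal_def, measure_univ, ENNReal.toReal_one, one_smul, smul_eq_mul, hg, ← hp, ← hq]
      ring
    -- derivative of g at 0
    set d := deriv f 0 with hdd
    have hterm : ∀ a : ℝ, HasDerivAt (fun t => f (t * a)) (d * a) 0 := by
      intro a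
      have h1 : HasDerivAt (fun t : ℝ => t * a) a 0 := by
        simpa using (hasDerivAt_id (0 : ℝ)).mul_const a
      have h2 : HasDerivAt f d ((0 : ℝ) * a) := by
        rw [zero_mul, hdd]
        exact hdiff.hasDerivAt
      exact h2.comp 0 h1
    have hgd : HasDerivAt g (d * (p - q)) 0 := by
      have h1 := (hterm (1 - m)).const_mul p
      have h2 := (hterm (-m)).const_mul (1 - p)
      have h3 := (hterm (m - 1)).const_mul q
      have h4 := (hterm m).const_mul (1 - q)
      have h := (h1.add h2).add (h3.add h4)
      have e : (p * (d * (1 - m)) + (1 - p) * (d * (-m)))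
          + (q * (d * (m - 1)) + (1 - q) * (d * m)) = d * (p - q) := by
        rw [hm]; ring
      rw [hg, ← e]
      exact h
    have hg0 : g 0 = 0 := by
      simp [hg, hf0]
    -- find t with g t > 0
    have hDne : d * (p - q) ≠ 0 := mul_ne_zero hderiv (sub_ne_zero.2 hpq)
    have hslope := hasDerivAt_iff_tendsto_slope.1 hgd
    obtain ⟨t, hgt⟩ : ∃ t : ℝ, 0 < g t := by
      rcases lt_or_gt_of_ne hDne with hD | hD
      · -- derivative negative: take t < 0
        have hmono : Filter.Tendsto (slope g 0) (nhdsWithin 0 (Set.Iio 0)) (nhds (d * (p - q))) :=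
          hslope.mono_left (nhdsWithin_mono 0 (fun x hx => ne_of_lt hx))
        have hev : ∀ᶠ t in nhdsWithin 0 (Set.Iio 0), slope g 0 t < 0 :=
          hmono.eventually (eventually_lt_nhds hD)
        obtain ⟨t, ht, htIio⟩ := (hev.and self_mem_nhdsWithin).exists
        refine ⟨t, ?_⟩
        rw [slope_def_field, hg0, sub_zero, sub_zero] at ht
        rcases div_neg_iff.1 ht with ⟨h1, h2⟩ | ⟨h1, h2⟩
        · linarith [htIio]
        · linarith
      · -- derivative positive: take t > 0
        have hmono : Filter.Tendsto (slope g 0) (nhdsWithin 0 (Set.Ioi 0)) (nhds (d * (p - q))) :=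
          hslope.mono_left (nhdsWithin_mono 0 (fun x hx => ne_of_gt hx))
        have hev : ∀ᶠ t in nhdsWithin 0 (Set.Ioi 0), 0 < slope g 0 t :=
          hmono.eventually (eventually_gt_nhds hD)
        obtain ⟨t, ht, htIoi⟩ := (hev.and self_mem_nhdsWithin).exists
        refine ⟨t, ?_⟩
        rw [slope_def_field, hg0, sub_zero, sub_zero] at ht
        rcases div_pos_iff.1 ht with ⟨h1, h2⟩ | ⟨h1, h2⟩
        · linarith
        · linarith [htIoi]
    -- contradiction with DRc = 0
    have hle := le_ciSup hFbdd ⟨s.indicator (fun _ => t), hcritm t, |t|, hcritb t⟩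
    rw [← hDRc, hD0] at hle
    simp only at hle
    rw [hFg t] at hle
    linarith
  refine ⟨hDRc0, ⟨hhard, fun hPQ => le_antisymm (hle0 hPQ) hDRc0⟩⟩
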